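/- Let {S_y : y ∈ Y} be a product r.c.p. of R with respect to Q such that S_y ≪ P for all y, let f be a Radon–Nikodym derivative of R with respect to P⊗Q, and let E_R := {f > 0}. Then R(E_R) = 1, and the set N := {y ∈ Y : S_y(E_R^y) < 1} is contained in a Q-null set; moreover, for every y ∉ N, the section E_R^y is a measurable support of S_y: S_y(E_R^y) = 1 and every A ∈ 𝔄 with P(A ∩ E_R^y) = 0 satisfies S_y(A) = 0. -/

import Mathlib

open MeasureTheory Set
open scoped ENNReal

theorem stmt15 {X Y : Type*} [MeasurableSpace X] [MeasurableSpace Y]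
    (P : Measure X) (Q : Measure Y) (R : Measure (X × Y))
    [IsProbabilityMeasure P] [IsProbabilityMeasure Q] [IsProbabilityMeasure R]
    (hP : R.map Prod.fst = P) (hQ : R.map Prod.snd = Q)
    (S : Y → Measure X) (hSprob : ∀ y, IsProbabilityMeasure (S y))
    (hSmeas : ∀ A : Set X, MeasurableSet A → Measurable fun y => S y A)
    (hSdis : ∀ (A : Set X) (B : Set Y), MeasurableSet A → MeasurableSet B →
      R (A ×ˢ B) = ∫⁻ y in B, S y A ∂Q)
    (hSac : ∀ y, S y ≪ P)
    (f : X × Y → ℝ≥0∞) (hf : Measurable f) (hRN : R = (P.prod Q).withDensity f) :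
    R {p : X × Y | 0 < f p} = 1 ∧
    (∃ N' : Set Y, MeasurableSet N' ∧ Q N' = 0 ∧
      {y : Y | S y {x : X | 0 < f (x, y)} < 1} ⊆ N') ∧
    (∀ y : Y, S y {x : X | 0 < f (x, y)} = 1 →
      S y {x : X | 0 < f (x, y)} = 1 ∧
        ∀ A : Set X, MeasurableSet A → P (A ∩ {x : X | 0 < f (x, y)}) = 0 → S y A = 0) := by
  classical
  have hEmeas : MeasurableSet {p : X × Y | 0 < f p} :=
    measurableSet_lt measurable_const hf
  have hEy : ∀ y : Y, MeasurableSet {x : X | 0 < f (x, y)} := fun y =>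
    measurableSet_lt measurable_const (hf.comp measurable_prodMk_right)
  -- R Eᶜ = 0
  have hEc : R {p : X × Y | 0 < f p}ᶜ = 0 := by
    rw [hRN, withDensity_apply _ hEmeas.compl]
    have h0 : ∀ᵐ p ∂((P.prod Q).restrict {p : X × Y | 0 < f p}ᶜ), f p = 0 := by
      rw [ae_restrict_iff' hEmeas.compl]
      filter_upwards with p hp
      simpa [pos_iff_ne_zero, not_not] using hp
    calc ∫⁻ p in {p : X × Y | 0 < f p}ᶜ, f p ∂(P.prod Q)
        = ∫⁻ _p in {p : X × Y | 0 < f p}ᶜ, 0 ∂(P.prod Q) := lintegral_congr_ae h0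
      _ = 0 := lintegral_zero
  have hRE : R {p : X × Y | 0 < f p} = 1 := (prob_compl_eq_zero_iff hEmeas).mp hEc
  refine ⟨hRE, ?_, ?_⟩
  · -- build kernel
    let κ : ProbabilityTheory.Kernel Y X :=
      ⟨S, Measure.measurable_of_measurable_coe S hSmeas⟩
    haveI : ProbabilityTheory.IsMarkovKernel κ := ⟨fun y => hSprob y⟩
    have hκ : ∀ y, κ y = S y := fun _ => rfl
    have hswap : R.map Prod.swap = Q.compProd κ := by
      refine MeasureTheory.ext_of_generate_finite _ generateFrom_prod.symm isPiSystem_prod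
        ?_ ?_
      · rintro s ⟨B, hB, A, hA, rfl⟩
        rw [Measure.map_apply measurable_swap ((hB : MeasurableSet B).prod hA),
          Set.preimage_swap_prod, hSdis A B hA hB,
          Measure.compProd_apply_prod hB hA]
        rfl
      · simp [Measure.map_apply measurable_swap MeasurableSet.univ]
    have ht : MeasurableSet {q : Y × X | 0 < f (q.2, q.1)}ᶜ :=
      (measurableSet_lt measurable_const (hf.comp measurable_swap)).compl
    have hint : ∫⁻ y, S y {x : X | 0 < f (x, y)}ᶜ ∂Q = 0 := by
      have h1 : (Q.compProd κ) {q : Y × X | 0 < f (q.2, q.1)}ᶜ = 0 := by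
        rw [← hswap, Measure.map_apply measurable_swap ht]
        have : Prod.swap ⁻¹' {q : Y × X | 0 < f (q.2, q.1)}ᶜ
            = {p : X × Y | 0 < f p}ᶜ := by
          ext p; simp [Prod.swap]
        rw [this]; exact hEc
      rw [Measure.compProd_apply ht] at h1
      have : ∀ y, κ y (Prod.mk y ⁻¹' {q : Y × X | 0 < f (q.2, q.1)}ᶜ)
          = S y {x : X | 0 < f (x, y)}ᶜ := by
        intro y; rfl
      simpa [this, hκ] using h1
    have hmeas : Measurable fun y => S y {x : X | 0 < f (x, y)}ᶜ := by
      have := ProbabilityTheory.Kernel.measurable_kernel_prodMk_left (κ := κ) ht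
      exact this
    have hae : ∀ᵐ y ∂Q, S y {x : X | 0 < f (x, y)}ᶜ = 0 :=
      (lintegral_eq_zero_iff hmeas).mp hint
    have hnull : Q {y : Y | S y {x : X | 0 < f (x, y)}ᶜ ≠ 0} = 0 := hae
    refine ⟨toMeasurable Q {y : Y | S y {x : X | 0 < f (x, y)}ᶜ ≠ 0},
      measurableSet_toMeasurable _ _, by rw [measure_toMeasurable]; exact hnull, ?_⟩
    intro y hy
    refine subset_toMeasurable _ _ ?_
    intro h0
    haveI := hSprob y
    exact absurd ((prob_compl_eq_zero_iff (hEy y)).mp h0) (ne_of_lt hy)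
  · intro y hy
    haveI := hSprob y
    refine ⟨hy, fun A hA hPA => ?_⟩
    have h1 : S y (A ∩ {x : X | 0 < f (x, y)}) = 0 := hSac y hPA
    have h2 : S y (A ∩ {x : X | 0 < f (x, y)}ᶜ) = 0 := by
      have hc : S y {x : X | 0 < f (x, y)}ᶜ = 0 :=
        (prob_compl_eq_zero_iff (hEy y)).mpr hy
      exact measure_mono_null (inter_subset_right) hc
    have : S y A ≤ 0 := by
      calc S y A = S y ((A ∩ {x : X | 0 < f (x, y)}) ∪ (A ∩ {x : X | 0 < f (x, y)}ᶜ)) := by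
            rw [← inter_union_distrib_left, union_compl_self, inter_univ]
        _ ≤ S y (A ∩ {x : X | 0 < f (x, y)}) + S y (A ∩ {x : X | 0 < f (x, y)}ᶜ) :=
            measure_union_le _ _
        _ = 0 := by rw [h1, h2, add_zero]
    exact le_antisymm this zero_le
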